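/- If T is a subsemigroup of S then Cayley(T) divides Cayley(S): there is a subsemigroup C of Cayley(S) and a surjective homomorphism C → Cayley(T), given by restriction to the subtree of words over T¹. -/

import Mathlib

/-- φ_s([a_1,...,a_n]) = [s a_1, s a_1 a_2, ..., s a_1 ⋯ a_n] -/
def phi {S : Type*} [Mul S] (s : S) (l : List S) : List S :=
  (l.scanl (· * ·) s).tail

/-- Cayley(S): the subsemigroup of functions on words over S¹ = WithOne S
(under composition) generated by the maps φ_s, s ∈ S. -/
def Cayley (S : Type*) [Semigroup S] : Subsemigroup (Function.End (List (WithOne S))) :=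
  Subsemigroup.closure {f | ∃ s : S, f = phi (s : WithOne S)}

theorem scanl_map_aux {A B : Type*} [Mul A] [Mul B] (h : A → B)
    (hm : ∀ a b, h (a * b) = h a * h b) :
    ∀ (l : List A) (s : A),
      (l.map h).scanl (· * ·) (h s) = (l.scanl (· * ·) s).map h := by
  intro l
  induction l with
  | nil => intro s; simp
  | cons a l ih =>
      intro s
      simp only [List.map_cons, List.scanl_cons, List.singleton_append, List.map_cons]
      rw [← hm, ih]

theorem phi_map_aux {A B : Type*} [Mul A] [Mul B] (h : A → B)
    (hm : ∀ a b, h (a * b) = h a * h b) (s : A) (l : List A) :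
    phi (h s) (l.map h) = (phi s l).map h := by
  unfold phi
  rw [scanl_map_aux h hm l s]
  cases l.scanl (· * ·) s <;> simp

theorem cayley_divides_of_subsemigroup {S : Type*} [Semigroup S] (T : Subsemigroup S) :
    ∃ C : Subsemigroup (Cayley S), ∃ Φ : C →ₙ* Cayley T, Function.Surjective Φ := by
  classical
  let ι : WithOne T →* WithOne S := WithOne.mapMulHom (MulMemClass.subtype T)
  have hιinj : Function.Injective ι := by
    exact WithOne.mapMulHom_injective Subtype.val_injective
  have hLinj : Function.Injective (List.map ι) := List.map_injective_iff.2 hιinj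
  have huniq : ∀ (f : Function.End (List (WithOne S)))
      (g g' : Function.End (List (WithOne T))),
      (∀ l, f (List.map ι l) = List.map ι (g l)) →
      (∀ l, f (List.map ι l) = List.map ι (g' l)) → g = g' := by
    intro f g g' h h'
    funext l
    exact hLinj (by rw [← h l, ← h' l])
  -- the subsemigroup of End (List (WithOne S)) of functions compatible with some g ∈ Cayley T
  let D : Subsemigroup (Function.End (List (WithOne S))) :=
    { carrier := {f | ∃ g : Function.End (List (WithOne T)),
        g ∈ Cayley T ∧ ∀ l, f (List.map ι l) = List.map ι (g l)}
      mul_mem' := by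
        rintro f₁ f₂ ⟨g₁, hg₁, h₁⟩ ⟨g₂, hg₂, h₂⟩
        refine ⟨g₁ * g₂, mul_mem hg₁ hg₂, fun l => ?_⟩
        show f₁ (f₂ (List.map ι l)) = List.map ι (g₁ (g₂ l))
        rw [h₂, h₁] }
  refine ⟨D.comap (MulMemClass.subtype (Cayley S)), ?_⟩
  have mem_spec : ∀ x : D.comap (MulMemClass.subtype (Cayley S)),
      ∃ g : Function.End (List (WithOne T)),
        g ∈ Cayley T ∧ ∀ l, x.1.1 (List.map ι l) = List.map ι (g l) := fun x => x.2
  let Φfun : D.comap (MulMemClass.subtype (Cayley S)) → Cayley T := fun x =>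
    ⟨Classical.choose (mem_spec x), (Classical.choose_spec (mem_spec x)).1⟩
  have Φspec : ∀ (x : D.comap (MulMemClass.subtype (Cayley S))) (l : List (WithOne T)),
      x.1.1 (List.map ι l) = List.map ι ((Φfun x).1 l) :=
    fun x => (Classical.choose_spec (mem_spec x)).2
  have Φmul : ∀ x y, Φfun (x * y) = Φfun x * Φfun y := by
    intro x y
    apply Subtype.ext
    refine huniq (x * y).1.1 _ _ (Φspec (x * y)) ?_
    intro l
    show x.1.1 (y.1.1 (List.map ι l)) = _
    rw [Φspec y, Φspec x]
    rfl
  refine ⟨⟨Φfun, Φmul⟩, ?_⟩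
  -- surjectivity
  rintro ⟨g, hg⟩
  have key : ∀ g ∈ Cayley T, ∃ f, f ∈ Cayley S ∧
      ∀ l, f (List.map ι l) = List.map ι (g l) := by
    intro g hg
    induction hg using Subsemigroup.closure_induction with
    | mem f hf =>
        obtain ⟨t, rfl⟩ := hf
        refine ⟨phi ((t : S) : WithOne S), Subsemigroup.subset_closure ⟨(t : S), rfl⟩, ?_⟩
        intro l
        have h1 : ((t : S) : WithOne S) = ι ((t : T) : WithOne T) := by
          simp [ι]
        rw [h1]
        exact phi_map_aux ι (map_mul ι) _ l
    | mul g₁ g₂ hg₁ hg₂ ih₁ ih₂ =>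
        obtain ⟨f₁, hf₁, h₁⟩ := ih₁
        obtain ⟨f₂, hf₂, h₂⟩ := ih₂
        refine ⟨f₁ * f₂, mul_mem hf₁ hf₂, fun l => ?_⟩
        show f₁ (f₂ (List.map ι l)) = List.map ι (g₁ (g₂ l))
        rw [h₂, h₁]
  obtain ⟨f, hfS, hf⟩ := key g hg
  have hxmem : (⟨f, hfS⟩ : Cayley S) ∈ D.comap (MulMemClass.subtype (Cayley S)) :=
    ⟨g, hg, hf⟩
  refine ⟨⟨⟨f, hfS⟩, hxmem⟩, ?_⟩
  exact Subtype.ext (huniq f _ _ (Φspec ⟨⟨f, hfS⟩, hxmem⟩) hf)
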